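/- Let (k_n)_n and (l_n)_n be sequences of natural numbers with lim_n k_n = lim_n l_n = ∞, and let f be an almost permutation of ℕ with lim_n k_{f(n)}/l_n = 1. Then there is a well-defined group isomorphism ψ_f : Sym[(k_n)_n] → Sym[(l_n)_n] such that for every (a_n)_n ∈ ∏_n Sym(k_n), ψ_f([(a_n)_n]) = [(b_n)_n], where b_n = a_{f(n)} ↕ Sym(l_n) for every n in a cofinite set on which f is injective, and b_n = 1 otherwise (the resulting class does not depend on these choices or on the representative (a_n)_n). -/

import Mathlib

open Filter Equiv Set

namespace SymPaper

/-- The normalized Hamming distance on permutations of `Fin N`: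
`d_N(σ,τ) = |{i : σ i ≠ τ i}| / N`. -/
noncomputable def hd {N : ℕ} (σ τ : Equiv.Perm (Fin N)) : ℝ :=
  ((Finset.univ.filter fun i => σ i ≠ τ i).card : ℝ) / N

lemma hd_nonneg {N : ℕ} (σ τ : Equiv.Perm (Fin N)) : 0 ≤ hd σ τ :=
  div_nonneg (Nat.cast_nonneg _) (Nat.cast_nonneg _)

lemma hd_self {N : ℕ} (σ : Equiv.Perm (Fin N)) : hd σ σ = 0 := by
  simp [hd]

lemma hd_filter_eq_support {N : ℕ} (σ τ : Equiv.Perm (Fin N)) :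
    (Finset.univ.filter fun i => σ i ≠ τ i) = (σ⁻¹ * τ).support := by
  ext i
  simp only [Finset.mem_filter, Finset.mem_univ, true_and, Equiv.Perm.mem_support,
    Equiv.Perm.mul_apply, ne_eq, Equiv.Perm.inv_eq_iff_eq]
  exact not_congr ⟨fun h => h.symm, fun h => h.symm⟩

lemma hd_one {N : ℕ} (σ : Equiv.Perm (Fin N)) :
    hd σ 1 = (σ.support.card : ℝ) / N := by
  unfold hd
  rw [hd_filter_eq_support, mul_one, Equiv.Perm.support_inv]

lemma hd_mul_one_le {N : ℕ} (σ τ : Equiv.Perm (Fin N)) :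
    hd (σ * τ) 1 ≤ hd σ 1 + hd τ 1 := by
  rcases Nat.eq_zero_or_pos N with h0 | hpos
  · subst h0; simp [hd]
  · have hN : (0 : ℝ) < N := by exact_mod_cast hpos
    rw [hd_one, hd_one, hd_one, ← add_div]
    rw [div_le_div_iff_of_pos_right hN]
    have h1 : ((σ * τ).support).card ≤ (σ.support ⊔ τ.support).card :=
      Finset.card_le_card (Equiv.Perm.support_mul_le σ τ)
    have h2 : (σ.support ⊔ τ.support).card ≤ σ.support.card + τ.support.card :=
      Finset.card_union_le _ _
    exact_mod_cast le_trans h1 h2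

lemma hd_inv_one {N : ℕ} (σ : Equiv.Perm (Fin N)) : hd σ⁻¹ 1 = hd σ 1 := by
  rw [hd_one, hd_one, Equiv.Perm.support_inv]

lemma hd_conj_one {N : ℕ} (g σ : Equiv.Perm (Fin N)) :
    hd (g * σ * g⁻¹) 1 = hd σ 1 := by
  rw [hd_one, hd_one, Equiv.Perm.support_conj, Finset.card_map]

/-- The normal subgroup of elements of `∏ n, Sym(k n)` that tend to the identity
along the filter `F`. -/
def symNull (k : ℕ → ℕ) (F : Filter ℕ) : Subgroup (∀ n, Equiv.Perm (Fin (k n))) where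
  carrier := {a | Filter.Tendsto (fun n => hd (a n) 1) F (nhds 0)}
  one_mem' := by
    simpa [hd_self] using (tendsto_const_nhds : Filter.Tendsto (fun _ : ℕ => (0:ℝ)) F (nhds 0))
  mul_mem' := by
    intro a b ha hb
    refine squeeze_zero (fun n => hd_nonneg _ _) (fun n => ?_) (by simpa using ha.add hb)
    exact hd_mul_one_le (a n) (b n)
  inv_mem' := by
    intro a ha
    simpa [hd_inv_one] using ha

instance symNull_normal (k : ℕ → ℕ) (F : Filter ℕ) : (symNull k F).Normal := by
  constructor
  intro a ha g
  show Filter.Tendsto (fun n => hd ((g * a * g⁻¹) n) 1) F (nhds 0)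
  have ha' : Filter.Tendsto (fun n => hd (a n) 1) F (nhds 0) := ha
  simpa [hd_conj_one] using ha'

/-- The metric reduced product `Sym[(k n)ₙ]`. -/
abbrev SymRP (k : ℕ → ℕ) : Type :=
  (∀ n, Equiv.Perm (Fin (k n))) ⧸ symNull k Filter.atTop

/-- The metric ultraproduct `∏ₙ Sym(k n) / U`. -/
abbrev SymUP (k : ℕ → ℕ) (U : Ultrafilter ℕ) : Type :=
  (∀ n, Equiv.Perm (Fin (k n))) ⧸ symNull k (U : Filter ℕ)

/-- Class of a sequence in the metric reduced product. -/
def mkRP {k : ℕ → ℕ} (a : ∀ n, Equiv.Perm (Fin (k n))) : SymRP k :=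
  QuotientGroup.mk a

/-- Class of a sequence in the metric ultraproduct. -/
def mkUP {k : ℕ → ℕ} (U : Ultrafilter ℕ) (a : ∀ n, Equiv.Perm (Fin (k n))) : SymUP k U :=
  QuotientGroup.mk a

section CutLift

lemma cut_exists {n : ℕ} (σ : Equiv.Perm (Fin n)) {m : ℕ} (h : m ≤ n) (i : Fin m) :
    ∃ kk : ℕ, 1 ≤ kk ∧ (((σ ^ kk) (Fin.castLE h i) : Fin n) : ℕ) < m := by
  refine ⟨orderOf σ, orderOf_pos σ, ?_⟩
  rw [pow_orderOf_eq_one]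
  simpa using i.2

/-- The underlying function of the cutting `σ ↓ Sym(m)`: it sends `i < m` to
`σ^k i` for the least `k ≥ 1` with `σ^k i < m`. -/
noncomputable def cutFun {n : ℕ} (σ : Equiv.Perm (Fin n)) {m : ℕ} (h : m ≤ n) (i : Fin m) :
    Fin m :=
  ⟨(((σ ^ (Nat.find (cut_exists σ h i))) (Fin.castLE h i) : Fin n) : ℕ),
    (Nat.find_spec (cut_exists σ h i)).2⟩

lemma cutFun_injective {n : ℕ} (σ : Equiv.Perm (Fin n)) {m : ℕ} (h : m ≤ n) :
    Function.Injective (cutFun σ h) := by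
  have key : ∀ i j : Fin m,
      Nat.find (cut_exists σ h i) ≤ Nat.find (cut_exists σ h j) →
      cutFun σ h i = cutFun σ h j → i = j := by
    intro i j hle hij
    set ki := Nat.find (cut_exists σ h i) with hki
    set kj := Nat.find (cut_exists σ h j) with hkj
    have hv : ((cutFun σ h i : Fin m) : ℕ) = ((cutFun σ h j : Fin m) : ℕ) :=
      congrArg Fin.val hij
    have hval : (σ ^ ki) (Fin.castLE h i) = (σ ^ kj) (Fin.castLE h j) := Fin.ext hv
    have hki1 : 1 ≤ ki := (Nat.find_spec (cut_exists σ h i)).1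
    have hkj1 : 1 ≤ kj := (Nat.find_spec (cut_exists σ h j)).1
    have hpow : σ ^ ki * σ ^ (kj - ki) = σ ^ kj := by
      rw [← pow_add, Nat.add_sub_cancel' hle]
    have h2 : (σ ^ (kj - ki)) (Fin.castLE h j) = Fin.castLE h i := by
      apply (σ ^ ki).injective
      calc (σ ^ ki) ((σ ^ (kj - ki)) (Fin.castLE h j))
          = (σ ^ ki * σ ^ (kj - ki)) (Fin.castLE h j) := rfl
        _ = (σ ^ kj) (Fin.castLE h j) := by rw [hpow]
        _ = (σ ^ ki) (Fin.castLE h i) := hval.symm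
    by_cases hzero : kj - ki = 0
    · have hkeq : ki = kj := le_antisymm hle (Nat.sub_eq_zero_iff_le.mp hzero)
      have : Fin.castLE h i = Fin.castLE h j := by
        apply (σ ^ kj).injective
        rw [← hval, hkeq]
      exact Fin.castLE_injective h this
    · exfalso
      have hlt : kj - ki < kj := Nat.sub_lt (lt_of_lt_of_le Nat.one_pos hkj1) hki1
      have := Nat.find_min (cut_exists σ h j) hlt
      apply this
      refine ⟨Nat.one_le_iff_ne_zero.mpr hzero, ?_⟩
      rw [h2]
      simpa using i.2
  intro i j hij
  rcases le_total (Nat.find (cut_exists σ h i)) (Nat.find (cut_exists σ h j)) with hle | hle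
  · exact key i j hle hij
  · exact (key j i hle hij.symm).symm

/-- Cutting `σ ↓ Sym(m)` of a permutation `σ ∈ Sym(n)` for `m ≤ n`. -/
noncomputable def cutPerm {n : ℕ} (σ : Equiv.Perm (Fin n)) {m : ℕ} (h : m ≤ n) :
    Equiv.Perm (Fin m) :=
  Equiv.ofBijective (cutFun σ h) (Finite.injective_iff_bijective.mp (cutFun_injective σ h))

/-- Lifting `τ ↑ Sym(n)` of a permutation `τ ∈ Sym(m)` for `m ≤ n`: it acts as `τ` on
`{0,…,m-1}` and fixes the remaining points. -/
noncomputable def liftPerm {m : ℕ} (τ : Equiv.Perm (Fin m)) {n : ℕ} (h : m ≤ n) :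
    Equiv.Perm (Fin n) :=
  τ.viaFintypeEmbedding (Fin.castLEEmb h)

/-- `σ ↕ Sym(n)`: lifting if `m ≤ n`, cutting if `n ≤ m`. -/
noncomputable def updown {m : ℕ} (σ : Equiv.Perm (Fin m)) (n : ℕ) : Equiv.Perm (Fin n) :=
  if h : m ≤ n then liftPerm σ h else cutPerm σ (le_of_lt (not_le.mp h))

end CutLift

/-- An almost permutation of `ℕ`: a map with cofinite range which is injective on a
cofinite set. -/
def AlmostPerm (f : ℕ → ℕ) : Prop :=
  (Set.range f)ᶜ.Finite ∧ ∃ S : Set ℕ, Sᶜ.Finite ∧ Set.InjOn f S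

/-- `limsup` of a real sequence along an infinite set of indices. -/
noncomputable def limsupOn (S : Set ℕ) (x : ℕ → ℝ) : ℝ :=
  Filter.limsup x (Filter.atTop ⊓ Filter.principal S)

/-- Almost equality: the sets where two sets of naturals differ is finite. -/
instance finSetoid : Setoid (Set ℕ) where
  r S T := (symmDiff S T).Finite
  iseqv := by
    refine ⟨fun S => by simp [symmDiff_self], fun h => by rwa [symmDiff_comm], ?_⟩
    intro S T V h1 h2
    exact (h1.union h2).subset (symmDiff_triangle S T V)

/-- The Boolean algebra `P(ℕ)/Fin`. -/
def PFin : Type := Quotient finSetoid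

/-- Class of a subset of `ℕ` in `P(ℕ)/Fin`. -/
def PFin.mk (S : Set ℕ) : PFin := Quotient.mk finSetoid S

/-- Join in `P(ℕ)/Fin`. -/
def PFin.sup : PFin → PFin → PFin :=
  Quotient.map₂ (· ∪ ·) (by
    intro S S' h1 T T' h2
    refine Set.Finite.subset (h1.union h2) ?_
    intro x hx
    simp only [Set.mem_symmDiff, Set.mem_union] at *
    tauto)

/-- Complement in `P(ℕ)/Fin`. -/
def PFin.compl : PFin → PFin :=
  Quotient.map (·ᶜ) (by
    intro S T h
    show (symmDiff Sᶜ Tᶜ).Finite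
    rwa [compl_symmDiff_compl])

/-- Todorčević's open coloring axiom `OCA`. -/
def OCA : Prop :=
  ∀ (X : Type) [MetricSpace X] [TopologicalSpace.SeparableSpace X],
    ∀ K : Set (X × X), IsOpen K → (∀ x y : X, (x, y) ∈ K → (y, x) ∈ K) →
      (∃ Y : Set X, ¬ Y.Countable ∧ ∀ x ∈ Y, ∀ y ∈ Y, x ≠ y → (x, y) ∈ K) ∨
      (∃ c : ℕ → Set X, (⋃ n, c n) = Set.univ ∧
        ∀ n, ∀ x ∈ c n, ∀ y ∈ c n, x ≠ y → (x, y) ∉ K)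

/-- Martin's axiom for σ-linked partial orders (for `ℵ₁` many dense sets). -/
def MAσlinked : Prop :=
  ∀ (P : Type) [PartialOrder P],
    (∃ Ps : ℕ → Set P, (⋃ n, Ps n) = Set.univ ∧
      ∀ n, ∀ p ∈ Ps n, ∀ q ∈ Ps n, ∃ r : P, r ≤ p ∧ r ≤ q) →
    ∀ (ι : Type) (D : ι → Set P), Cardinal.mk ι ≤ Cardinal.aleph 1 →
      (∀ i, ∀ p : P, ∃ q ∈ D i, q ≤ p) →
      ∃ G : Set P,
        (∀ p ∈ G, ∀ q ∈ G, ∃ r ∈ G, r ≤ p ∧ r ≤ q) ∧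
        (∀ p ∈ G, ∀ q : P, p ≤ q → q ∈ G) ∧
        ∀ i, (G ∩ D i).Nonempty

section Aux

open Filter Equiv Set Finset

/-! ### more hd lemmas -/

lemma hd_comm {N : ℕ} (σ τ : Equiv.Perm (Fin N)) : hd σ τ = hd τ σ := by
  have h : (Finset.univ.filter fun i => σ i ≠ τ i) = (Finset.univ.filter fun i => τ i ≠ σ i) := by
    ext i; simp [ne_comm]
  unfold hd; rw [h]

lemma hd_triangle {N : ℕ} (σ τ υ : Equiv.Perm (Fin N)) :
    hd σ υ ≤ hd σ τ + hd τ υ := by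
  rcases Nat.eq_zero_or_pos N with h0 | hpos
  · subst h0; simp [hd]
  · have hN : (0 : ℝ) < N := by exact_mod_cast hpos
    unfold hd
    rw [← add_div, div_le_div_iff_of_pos_right hN]
    have hsub : (Finset.univ.filter fun i => σ i ≠ υ i) ⊆
        (Finset.univ.filter fun i => σ i ≠ τ i) ∪ (Finset.univ.filter fun i => τ i ≠ υ i) := by
      intro i hi
      simp only [Finset.mem_filter, Finset.mem_univ, true_and, Finset.mem_union] at *
      by_contra hcon
      push_neg at hcon
      exact hi (hcon.1.trans hcon.2)
    calc ((Finset.univ.filter fun i => σ i ≠ υ i).card : ℝ)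
        ≤ (((Finset.univ.filter fun i => σ i ≠ τ i) ∪ (Finset.univ.filter fun i => τ i ≠ υ i)).card : ℝ) := by
          exact_mod_cast Finset.card_le_card hsub
      _ ≤ _ := by exact_mod_cast Finset.card_union_le _ _

lemma hd_eq_inv_mul {N : ℕ} (σ τ : Equiv.Perm (Fin N)) : hd σ τ = hd (σ⁻¹ * τ) 1 := by
  rw [hd_one]
  unfold hd
  rw [hd_filter_eq_support]

lemma hd_mul_left {N : ℕ} (x y z : Equiv.Perm (Fin N)) : hd (x * y) (x * z) = hd y z := by
  have h : (Finset.univ.filter fun i => (x * y) i ≠ (x * z) i)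
      = (Finset.univ.filter fun i => y i ≠ z i) := by
    ext i; simp [Equiv.Perm.mul_apply, x.injective.ne_iff]
  unfold hd; rw [h]

/-! ### cut and lift value lemmas -/

lemma cutPerm_apply {n m : ℕ} (σ : Equiv.Perm (Fin n)) (h : m ≤ n) (i : Fin m)
    (hv : ((σ (Fin.castLE h i)) : ℕ) < m) :
    ((cutPerm σ h i : Fin m) : ℕ) = ((σ (Fin.castLE h i)) : ℕ) := by
  have hfind : Nat.find (cut_exists σ h i) = 1 := by
    rw [Nat.find_eq_iff]
    exact ⟨⟨le_refl 1, by simpa using hv⟩, by intro j hj; interval_cases j; simp⟩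
  show ((cutFun σ h i : Fin m) : ℕ) = _
  simp [cutFun, hfind]

lemma cutPerm_apply_eq {n m : ℕ} (σ : Equiv.Perm (Fin n)) (h : m ≤ n) (i : Fin m)
    (hv : ((σ (Fin.castLE h i)) : ℕ) < m) :
    Fin.castLE h (cutPerm σ h i) = σ (Fin.castLE h i) := by
  have := cutPerm_apply σ h i hv
  exact Fin.ext (by simpa using this)

lemma cutPerm_fix {n m : ℕ} (σ : Equiv.Perm (Fin n)) (h : m ≤ n) (i : Fin m)
    (hfix : σ (Fin.castLE h i) = Fin.castLE h i) :
    cutPerm σ h i = i := by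
  have hv : ((σ (Fin.castLE h i)) : ℕ) < m := by rw [hfix]; simpa using i.2
  have := cutPerm_apply σ h i hv
  rw [hfix] at this
  exact Fin.ext (by simpa using this)

lemma liftPerm_apply_castLE {m n : ℕ} (τ : Equiv.Perm (Fin m)) (h : m ≤ n) (i : Fin m) :
    liftPerm τ h (Fin.castLE h i) = Fin.castLE h (τ i) :=
  Equiv.Perm.viaFintypeEmbedding_apply_image τ (Fin.castLEEmb h) i

lemma liftPerm_apply_of_le {m n : ℕ} (τ : Equiv.Perm (Fin m)) (h : m ≤ n) (j : Fin n)
    (hj : m ≤ (j : ℕ)) : liftPerm τ h j = j := by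
  apply Equiv.Perm.viaFintypeEmbedding_apply_notMem_range
  rintro ⟨i, rfl⟩
  simp only [Fin.castLEEmb_apply, Fin.coe_castLE] at hj
  have : (i : ℕ) < m := i.2
  omega

lemma liftPerm_mul {m n : ℕ} (σ τ : Equiv.Perm (Fin m)) (h : m ≤ n) :
    liftPerm (σ * τ) h = liftPerm σ h * liftPerm τ h := by
  ext j
  by_cases hj : (j : ℕ) < m
  · have hje : j = Fin.castLE h ⟨(j : ℕ), hj⟩ := rfl
    rw [hje, Equiv.Perm.mul_apply, liftPerm_apply_castLE, liftPerm_apply_castLE,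
      liftPerm_apply_castLE]
    rfl
  · push_neg at hj
    rw [Equiv.Perm.mul_apply, liftPerm_apply_of_le _ _ _ hj, liftPerm_apply_of_le _ _ _ hj,
      liftPerm_apply_of_le _ _ _ hj]

lemma liftPerm_refl {m : ℕ} (τ : Equiv.Perm (Fin m)) (h : m ≤ m) :
    liftPerm τ h = τ := by
  ext j
  have hje : j = Fin.castLE h ⟨(j : ℕ), j.2⟩ := rfl
  rw [hje, liftPerm_apply_castLE]
  rfl

end Aux
/-! ### counting lemmas -/

lemma high_card (n m : ℕ) (h : m ≤ n) :
    (Finset.univ.filter fun j : Fin n => m ≤ (j : ℕ)).card = n - m := by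
  have hlow : (Finset.univ.filter fun j : Fin n => (j : ℕ) < m)
      = Finset.map (Fin.castLEEmb h) Finset.univ := by
    ext j
    simp only [Finset.mem_filter, Finset.mem_univ, true_and, Finset.mem_map,
      Fin.castLEEmb_apply]
    constructor
    · intro hj; exact ⟨⟨(j : ℕ), hj⟩, Fin.ext rfl⟩
    · rintro ⟨i, rfl⟩; simpa using i.2
  have hcompl : (Finset.univ.filter fun j : Fin n => m ≤ (j : ℕ))
      = Finset.univ.filter fun j : Fin n => ¬ ((j : ℕ) < m) := by
    ext j; simp [not_lt]
  have htot := Finset.card_filter_add_card_filter_not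
    (s := (Finset.univ : Finset (Fin n))) (p := fun j : Fin n => (j : ℕ) < m)
  rw [hlow] at htot
  simp only [Finset.card_map, Finset.card_univ, Fintype.card_fin] at htot
  rw [hcompl]
  omega

lemma support_liftPerm_card {m n : ℕ} (τ : Equiv.Perm (Fin m)) (h : m ≤ n) :
    (liftPerm τ h).support.card ≤ τ.support.card := by
  have hsub : (liftPerm τ h).support ⊆ τ.support.map (Fin.castLEEmb h) := by
    intro j hj
    rw [Equiv.Perm.mem_support] at hj
    by_cases hjm : (j : ℕ) < m
    · have hje : j = Fin.castLE h ⟨(j : ℕ), hjm⟩ := rfl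
      rw [Finset.mem_map]
      refine ⟨⟨(j : ℕ), hjm⟩, ?_, rfl⟩
      rw [Equiv.Perm.mem_support]
      intro hfix
      apply hj
      rw [hje, liftPerm_apply_castLE, hfix]
    · exact absurd (liftPerm_apply_of_le τ h j (not_lt.mp hjm)) hj
  calc (liftPerm τ h).support.card ≤ (τ.support.map (Fin.castLEEmb h)).card :=
        Finset.card_le_card hsub
    _ = τ.support.card := Finset.card_map _

lemma support_cutPerm_card {n m : ℕ} (σ : Equiv.Perm (Fin n)) (h : m ≤ n) :
    (cutPerm σ h).support.card ≤ σ.support.card := by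
  apply Finset.card_le_card_of_injOn (Fin.castLE h)
  · intro i hi
    rw [Finset.mem_coe, Equiv.Perm.mem_support] at hi
    rw [Finset.mem_coe, Equiv.Perm.mem_support]
    intro hfix
    exact hi (cutPerm_fix σ h i hfix)
  · exact fun x _ y _ hxy => Fin.castLE_injective h hxy

lemma updown_support_card {m N : ℕ} (σ : Equiv.Perm (Fin m)) :
    (updown σ N).support.card ≤ σ.support.card := by
  unfold updown
  split
  · exact support_liftPerm_card σ _
  · exact support_cutPerm_card σ _

lemma liftPerm_one {m n : ℕ} (h : m ≤ n) : liftPerm (1 : Equiv.Perm (Fin m)) h = 1 := by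
  ext j
  by_cases hj : (j : ℕ) < m
  · have hje : j = Fin.castLE h ⟨(j : ℕ), hj⟩ := rfl
    rw [hje, liftPerm_apply_castLE]
    rfl
  · rw [liftPerm_apply_of_le _ h j (not_lt.mp hj)]
    rfl

lemma cutPerm_one {n m : ℕ} (h : m ≤ n) : cutPerm (1 : Equiv.Perm (Fin n)) h = 1 := by
  ext i
  rw [show ((1 : Equiv.Perm (Fin m)) i) = i from rfl]
  exact congrArg Fin.val (cutPerm_fix 1 h i rfl)

lemma updown_one {m N : ℕ} : updown (1 : Equiv.Perm (Fin m)) N = 1 := by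
  unfold updown
  split
  · exact liftPerm_one _
  · exact cutPerm_one _

/-! ### multiplicativity defect -/

lemma cut_mul_defect {n m : ℕ} (σ τ : Equiv.Perm (Fin n)) (h : m ≤ n) :
    (Finset.univ.filter fun i : Fin m =>
      cutPerm (σ * τ) h i ≠ cutPerm σ h (cutPerm τ h i)).card ≤ 2 * (n - m) := by
  set A := Finset.univ.filter (fun i : Fin m => m ≤ ((τ (Fin.castLE h i)) : ℕ)) with hA
  set B := Finset.univ.filter (fun i : Fin m => m ≤ ((σ (τ (Fin.castLE h i))) : ℕ)) with hB
  have hsub : (Finset.univ.filter fun i : Fin m =>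
      cutPerm (σ * τ) h i ≠ cutPerm σ h (cutPerm τ h i)) ⊆ A ∪ B := by
    intro i hi
    rw [Finset.mem_filter] at hi
    by_contra hcon
    simp only [Finset.mem_union, hA, hB, Finset.mem_filter, Finset.mem_univ, true_and,
      not_or, not_le] at hcon
    obtain ⟨h1, h2⟩ := hcon
    apply hi.2
    apply Fin.castLE_injective h
    have e1 : Fin.castLE h (cutPerm τ h i) = τ (Fin.castLE h i) := cutPerm_apply_eq τ h i h1
    have h2' : ((σ (Fin.castLE h (cutPerm τ h i))) : ℕ) < m := by rw [e1]; exact h2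
    have e2 : Fin.castLE h (cutPerm σ h (cutPerm τ h i))
        = σ (Fin.castLE h (cutPerm τ h i)) := cutPerm_apply_eq σ h _ h2'
    have h3' : (((σ * τ) (Fin.castLE h i)) : ℕ) < m := by
      rw [Equiv.Perm.mul_apply]; exact h2
    have e3 : Fin.castLE h (cutPerm (σ * τ) h i)
        = (σ * τ) (Fin.castLE h i) := cutPerm_apply_eq (σ * τ) h i h3'
    rw [e3, e2, e1, Equiv.Perm.mul_apply]
  have hAcard : A.card ≤ n - m := by
    rw [← high_card n m h]
    apply Finset.card_le_card_of_injOn (fun i => τ (Fin.castLE h i))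
    · intro i hi
      simp only [hA, Finset.mem_coe, Finset.mem_filter, Finset.mem_univ, true_and] at hi
      simp only [Finset.mem_coe, Finset.mem_filter, Finset.mem_univ, true_and]
      exact hi
    · intro x _ y _ hxy
      exact Fin.castLE_injective h (τ.injective hxy)
  have hBcard : B.card ≤ n - m := by
    rw [← high_card n m h]
    apply Finset.card_le_card_of_injOn (fun i => σ (τ (Fin.castLE h i)))
    · intro i hi
      simp only [hB, Finset.mem_coe, Finset.mem_filter, Finset.mem_univ, true_and] at hi
      simp only [Finset.mem_coe, Finset.mem_filter, Finset.mem_univ, true_and]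
      exact hi
    · intro x _ y _ hxy
      exact Fin.castLE_injective h (τ.injective (σ.injective hxy))
  calc (Finset.univ.filter fun i : Fin m =>
        cutPerm (σ * τ) h i ≠ cutPerm σ h (cutPerm τ h i)).card
      ≤ (A ∪ B).card := Finset.card_le_card hsub
    _ ≤ A.card + B.card := Finset.card_union_le _ _
    _ ≤ 2 * (n - m) := by omega

lemma updown_mul_defect {m N : ℕ} (σ τ : Equiv.Perm (Fin m)) :
    (Finset.univ.filter fun i : Fin N =>
      updown (σ * τ) N i ≠ (updown σ N * updown τ N) i).card ≤ 2 * (m - N) := by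
  unfold updown
  by_cases hmn : m ≤ N
  · rw [dif_pos hmn, dif_pos hmn, dif_pos hmn, liftPerm_mul]
    simp
  · rw [dif_neg hmn, dif_neg hmn, dif_neg hmn]
    have := cut_mul_defect σ τ (le_of_not_ge hmn)
    refine (le_of_eq ?_).trans this
    apply congrArg Finset.card
    ext i
    rw [Finset.mem_filter, Finset.mem_filter]
    exact Iff.rfl

/-! ### roundtrip -/

lemma cut_lift {m n : ℕ} (σ : Equiv.Perm (Fin m)) (h : m ≤ n) :
    cutPerm (liftPerm σ h) h = σ := by
  ext i
  have hv : (((liftPerm σ h) (Fin.castLE h i)) : ℕ) < m := by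
    rw [liftPerm_apply_castLE]
    simpa using (σ i).2
  have := cutPerm_apply_eq (liftPerm σ h) h i hv
  rw [liftPerm_apply_castLE] at this
  exact congrArg Fin.val (Fin.castLE_injective h this)

lemma lift_cut_defect {n m : ℕ} (σ : Equiv.Perm (Fin n)) (h : m ≤ n) :
    (Finset.univ.filter fun j : Fin n =>
      liftPerm (cutPerm σ h) h j ≠ σ j).card ≤ 2 * (n - m) := by
  set A := Finset.univ.filter (fun j : Fin n => m ≤ (j : ℕ)) with hA
  set B := Finset.univ.filter (fun j : Fin n => m ≤ ((σ j) : ℕ)) with hB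
  have hsub : (Finset.univ.filter fun j : Fin n =>
      liftPerm (cutPerm σ h) h j ≠ σ j) ⊆ A ∪ B := by
    intro j hj
    rw [Finset.mem_filter] at hj
    by_contra hcon
    simp only [Finset.mem_union, hA, hB, Finset.mem_filter, Finset.mem_univ, true_and,
      not_or, not_le] at hcon
    obtain ⟨h1, h2⟩ := hcon
    apply hj.2
    have hje : j = Fin.castLE h ⟨(j : ℕ), h1⟩ := rfl
    rw [hje, liftPerm_apply_castLE]
    have h2' : ((σ (Fin.castLE h ⟨(j : ℕ), h1⟩)) : ℕ) < m := by rw [← hje]; exact h2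
    rw [cutPerm_apply_eq σ h _ h2', ← hje]
  have hAcard : A.card ≤ n - m := le_of_eq (high_card n m h)
  have hBcard : B.card ≤ n - m := by
    rw [← high_card n m h]
    apply Finset.card_le_card_of_injOn (fun j => σ j)
    · intro j hj
      simp only [hB, Finset.mem_coe, Finset.mem_filter, Finset.mem_univ, true_and] at hj
      simp only [Finset.mem_coe, Finset.mem_filter, Finset.mem_univ, true_and]
      exact hj
    · intro x _ y _ hxy
      exact σ.injective hxy
  calc (Finset.univ.filter fun j : Fin n => liftPerm (cutPerm σ h) h j ≠ σ j).card
      ≤ (A ∪ B).card := Finset.card_le_card hsub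
    _ ≤ A.card + B.card := Finset.card_union_le _ _
    _ ≤ 2 * (n - m) := by omega

lemma updown_roundtrip {m N : ℕ} (σ : Equiv.Perm (Fin m)) :
    (Finset.univ.filter fun i : Fin m =>
      updown (updown σ N) m i ≠ σ i).card ≤ 2 * (m - N) := by
  unfold updown
  by_cases hmn : m ≤ N
  · rw [dif_pos hmn]
    by_cases hnm : N ≤ m
    · have hmN : m = N := le_antisymm hmn hnm
      subst hmN
      rw [dif_pos hnm, liftPerm_refl, liftPerm_refl]
      simp
    · rw [dif_neg hnm, cut_lift]
      simp
  · rw [dif_neg hmn]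
    have hnm : N ≤ m := le_of_not_ge hmn
    rw [dif_pos hnm]
    exact lift_cut_defect σ hnm
/-! ### real estimates -/

lemma hd_le_div {N : ℕ} (σ τ : Equiv.Perm (Fin N)) {c : ℕ}
    (hc : (Finset.univ.filter fun i => σ i ≠ τ i).card ≤ c) :
    hd σ τ ≤ (c : ℝ) / N := by
  rcases Nat.eq_zero_or_pos N with h0 | hpos
  · subst h0; simp [hd]
  · have hN : (0 : ℝ) < N := by exact_mod_cast hpos
    unfold hd
    rw [div_le_div_iff_of_pos_right hN]
    exact_mod_cast hc

lemma natsub_div_le {M N : ℕ} (hN : 1 ≤ N) :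
    ((M - N : ℕ) : ℝ) / N ≤ |(M : ℝ) / N - 1| := by
  have hN' : (0 : ℝ) < N := by exact_mod_cast hN
  rcases le_total N M with h | h
  · have hc : ((M - N : ℕ) : ℝ) = (M : ℝ) - N := by
      push_cast [h]; ring
    have he : (M : ℝ) / N - 1 = ((M : ℝ) - N) / N := by field_simp
    rw [hc, he]
    exact le_abs_self _
  · rw [Nat.sub_eq_zero_of_le h]
    simpa using abs_nonneg ((M : ℝ) / N - 1)

lemma natsub_div_le' {M N : ℕ} (hN : 1 ≤ N) :
    ((M - N : ℕ) : ℝ) / M ≤ |(M : ℝ) / N - 1| := by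
  have hN' : (0 : ℝ) < N := by exact_mod_cast hN
  rcases le_total N M with h | h
  · refine le_trans ?_ (natsub_div_le hN)
    have hM' : (0 : ℝ) < M := lt_of_lt_of_le hN' (by exact_mod_cast h)
    exact div_le_div_of_nonneg_left (by positivity) hN' (by exact_mod_cast h)
  · rw [Nat.sub_eq_zero_of_le h]
    simpa using abs_nonneg ((M : ℝ) / N - 1)

lemma hd_updown_one_le {m N : ℕ} (σ : Equiv.Perm (Fin m)) :
    hd (updown σ N) 1 ≤ (σ.support.card : ℝ) / N := by
  rw [hd_one]
  rcases Nat.eq_zero_or_pos N with h0 | hpos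
  · subst h0; simp
  · have hN : (0 : ℝ) < N := by exact_mod_cast hpos
    rw [div_le_div_iff_of_pos_right hN]
    exact_mod_cast updown_support_card σ

lemma hd_updown_le {m N : ℕ} (σ τ : Equiv.Perm (Fin m)) :
    hd (updown σ N) (updown τ N) ≤
      ((σ⁻¹ * τ).support.card : ℝ) / N + 2 * ((m - N : ℕ) : ℝ) / N := by
  set z := σ⁻¹ * τ with hz
  have hτ : τ = σ * z := by rw [hz]; group
  calc hd (updown σ N) (updown τ N)
      ≤ hd (updown σ N) (updown σ N * updown z N)
        + hd (updown σ N * updown z N) (updown τ N) := hd_triangle _ _ _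
    _ ≤ ((σ⁻¹ * τ).support.card : ℝ) / N + 2 * ((m - N : ℕ) : ℝ) / N := by
        apply add_le_add
        · have h1 : hd (updown σ N) (updown σ N * updown z N) = hd (updown z N) 1 := by
            calc hd (updown σ N) (updown σ N * updown z N)
                = hd (updown σ N * 1) (updown σ N * updown z N) := by rw [mul_one]
              _ = hd 1 (updown z N) := hd_mul_left _ _ _
              _ = hd (updown z N) 1 := hd_comm _ _
          rw [h1, ← hz]
          calc hd (updown z N) 1 ≤ ((z.support.card : ℝ)) / N := hd_updown_one_le z
            _ = _ := by rw [hz]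
        · have h2 : hd (updown σ N * updown z N) (updown τ N)
              = hd (updown (σ * z) N) (updown σ N * updown z N) := by
            rw [← hτ]; exact hd_comm _ _
          rw [h2, mul_div_assoc]
          have := hd_le_div (updown (σ * z) N) (updown σ N * updown z N)
            (updown_mul_defect σ z)
          calc hd (updown (σ * z) N) (updown σ N * updown z N)
              ≤ ((2 * (m - N) : ℕ) : ℝ) / N := this
            _ = 2 * (((m - N : ℕ) : ℝ) / N) := by push_cast; ring
/-! ### the push construction -/

open Classical in
/-- The sequence-level transfer map. -/
noncomputable def pushSeq (k l f : ℕ → ℕ) (S : Set ℕ) (a : ∀ n, Equiv.Perm (Fin (k n))) :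
    ∀ n, Equiv.Perm (Fin (l n)) :=
  fun n => if n ∈ S then updown (a (f n)) (l n) else 1

/-- The hypotheses needed for the transfer construction. -/
structure GoodData (k l f : ℕ → ℕ) (S : Set ℕ) : Prop where
  hl : Tendsto l atTop atTop
  hS : Sᶜ.Finite
  hinj : Set.InjOn f S
  hratio : Tendsto (fun n => (k (f n) : ℝ) / (l n)) atTop (nhds 1)

namespace GoodData

variable {k l f : ℕ → ℕ} {S : Set ℕ} (hG : GoodData k l f S)
include hG

lemma eventually_mem : ∀ᶠ n in atTop, n ∈ S := by
  rw [← Nat.cofinite_eq_atTop]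
  exact hG.hS.eventually_cofinite_notMem.mono (by simp)

lemma f_tendsto : Tendsto f atTop atTop := by
  rw [tendsto_atTop]
  intro B
  rw [← Nat.cofinite_eq_atTop, eventually_cofinite]
  have hsub : {n | ¬ B ≤ f n} ⊆ Sᶜ ∪ (S ∩ f ⁻¹' (Set.Iio B)) := by
    intro n hn
    by_cases hnS : n ∈ S
    · exact Or.inr ⟨hnS, by simpa using not_le.mp hn⟩
    · exact Or.inl hnS
  refine Set.Finite.subset (hG.hS.union ?_) hsub
  apply Set.Finite.of_finite_image ((Set.finite_Iio B).subset ?_)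
    (hG.hinj.mono Set.inter_subset_left)
  rintro x ⟨n, ⟨-, hn⟩, rfl⟩
  exact hn

lemma kf_tendsto : Tendsto (fun n => k (f n)) atTop atTop := by
  rw [← tendsto_natCast_atTop_iff (R := ℝ)]
  have h1 : Tendsto (fun n => ((l n : ℝ))) atTop atTop :=
    tendsto_natCast_atTop_atTop.comp hG.hl
  have h2 : Tendsto (fun n => (k (f n) : ℝ) / (l n) * (l n)) atTop atTop :=
    hG.hratio.pos_mul_atTop one_pos h1
  apply h2.congr'
  filter_upwards [hG.hl.eventually_ge_atTop 1] with n hn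
  have : (l n : ℝ) ≠ 0 := by positivity
  field_simp

lemma abs_tendsto : Tendsto (fun n => 2 * |(k (f n) : ℝ) / (l n) - 1|) atTop (nhds 0) := by
  have h := ((hG.hratio.sub_const 1).abs.const_mul 2)
  simpa using h

lemma push_close (a b : ∀ n, Equiv.Perm (Fin (k n)))
    (hab : Tendsto (fun n => hd (a n) (b n)) atTop (nhds 0)) :
    Tendsto (fun n => hd (pushSeq k l f S a n) (pushSeq k l f S b n)) atTop (nhds 0) := by
  have hcomp : Tendsto (fun n => hd (a (f n)) (b (f n))) atTop (nhds 0) :=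
    hab.comp hG.f_tendsto
  have hbound : Tendsto (fun n =>
      hd (a (f n)) (b (f n)) * ((k (f n) : ℝ) / (l n))
        + 2 * |(k (f n) : ℝ) / (l n) - 1|) atTop (nhds 0) := by
    have := (hcomp.mul hG.hratio).add hG.abs_tendsto
    simpa using this
  refine squeeze_zero' (Eventually.of_forall fun n => hd_nonneg _ _) ?_ hbound
  filter_upwards [hG.eventually_mem, hG.hl.eventually_ge_atTop 1,
    hG.kf_tendsto.eventually_ge_atTop 1] with n hnS hN hm
  have hN' : (0 : ℝ) < l n := by exact_mod_cast hN
  have hm' : (0 : ℝ) < k (f n) := by exact_mod_cast hm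
  simp only [pushSeq, if_pos hnS]
  calc hd (updown (a (f n)) (l n)) (updown (b (f n)) (l n))
      ≤ (((a (f n))⁻¹ * b (f n)).support.card : ℝ) / (l n)
        + 2 * ((k (f n) - l n : ℕ) : ℝ) / (l n) := hd_updown_le _ _
    _ ≤ hd (a (f n)) (b (f n)) * ((k (f n) : ℝ) / (l n))
        + 2 * |(k (f n) : ℝ) / (l n) - 1| := by
        apply add_le_add
        · have he : hd (a (f n)) (b (f n))
              = (((a (f n))⁻¹ * b (f n)).support.card : ℝ) / (k (f n)) := by
            rw [hd_eq_inv_mul, hd_one]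
          rw [he]
          apply le_of_eq
          field_simp
        · rw [mul_div_assoc]
          have := natsub_div_le (M := k (f n)) hN
          nlinarith [this]

lemma push_mul_close (a b : ∀ n, Equiv.Perm (Fin (k n))) :
    Tendsto (fun n => hd (pushSeq k l f S (a * b) n)
      ((pushSeq k l f S a * pushSeq k l f S b) n)) atTop (nhds 0) := by
  refine squeeze_zero' (Eventually.of_forall fun n => hd_nonneg _ _) ?_ hG.abs_tendsto
  filter_upwards [hG.eventually_mem, hG.hl.eventually_ge_atTop 1] with n hnS hN
  simp only [pushSeq, Pi.mul_apply, if_pos hnS]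
  have h1 : hd (updown ((a * b) (f n)) (l n))
      (updown (a (f n)) (l n) * updown (b (f n)) (l n))
      ≤ ((2 * (k (f n) - l n) : ℕ) : ℝ) / (l n) := by
    apply hd_le_div
    exact updown_mul_defect (a (f n)) (b (f n))
  refine h1.trans ?_
  have h2 := natsub_div_le (M := k (f n)) hN
  push_cast
  rw [mul_div_assoc]
  nlinarith [h2]

end GoodData

lemma mkRP_eq_iff {k : ℕ → ℕ} (a b : ∀ n, Equiv.Perm (Fin (k n))) :
    mkRP a = mkRP b ↔ Tendsto (fun n => hd (a n) (b n)) atTop (nhds 0) := by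
  rw [mkRP, mkRP, QuotientGroup.eq]
  have : ∀ n, hd ((a⁻¹ * b) n) 1 = hd (a n) (b n) := fun n =>
    (hd_eq_inv_mul (a n) (b n)).symm
  constructor
  · intro h
    have h' : Tendsto (fun n => hd ((a⁻¹ * b) n) 1) atTop (nhds 0) := h
    exact h'.congr fun n => this n
  · intro h
    show Tendsto (fun n => hd ((a⁻¹ * b) n) 1) atTop (nhds 0)
    exact h.congr fun n => (this n).symm
lemma eventually_mem_of_cofinite {S : Set ℕ} (hS : Sᶜ.Finite) : ∀ᶠ n in atTop, n ∈ S := by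
  rw [← Nat.cofinite_eq_atTop]
  exact hS.eventually_cofinite_notMem.mono (by simp)

lemma tendsto_atTop_of_injOn_cofinite {f : ℕ → ℕ} {S : Set ℕ} (hS : Sᶜ.Finite)
    (hinj : Set.InjOn f S) : Tendsto f atTop atTop := by
  rw [tendsto_atTop]
  intro B
  rw [← Nat.cofinite_eq_atTop, eventually_cofinite]
  have hsub : {n | ¬ B ≤ f n} ⊆ Sᶜ ∪ (S ∩ f ⁻¹' (Set.Iio B)) := by
    intro n hn
    by_cases hnS : n ∈ S
    · exact Or.inr ⟨hnS, by simpa using not_le.mp hn⟩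
    · exact Or.inl hnS
  refine Set.Finite.subset (hS.union ?_) hsub
  apply Set.Finite.of_finite_image ((Set.finite_Iio B).subset ?_)
    (hinj.mono Set.inter_subset_left)
  rintro x ⟨n, ⟨-, hn⟩, rfl⟩
  exact hn

lemma GoodData.exists_hom {k l f : ℕ → ℕ} {S : Set ℕ} (hG : GoodData k l f S) :
    ∃ φ : SymRP k → SymRP l,
      (∀ a, φ (mkRP a) = mkRP (pushSeq k l f S a)) ∧
      (∀ x y, φ (x * y) = φ x * φ y) := by
  have hresp : ∀ a b : ∀ n, Equiv.Perm (Fin (k n)),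
      @Setoid.r _ (QuotientGroup.leftRel (symNull k atTop)) a b →
      mkRP (pushSeq k l f S a) = mkRP (pushSeq k l f S b) := by
    intro a b hab
    rw [QuotientGroup.leftRel_apply] at hab
    have h1 : mkRP a = mkRP b := QuotientGroup.eq.mpr hab
    have h2 : Tendsto (fun n => hd (a n) (b n)) atTop (nhds 0) := (mkRP_eq_iff a b).mp h1
    exact (mkRP_eq_iff _ _).mpr (hG.push_close a b h2)
  let φ : SymRP k → SymRP l := Quotient.lift (fun a => mkRP (pushSeq k l f S a)) hresp
  have hφ : ∀ a, φ (mkRP a) = mkRP (pushSeq k l f S a) := fun a => rfl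
  refine ⟨φ, hφ, ?_⟩
  intro x y
  refine QuotientGroup.induction_on x ?_
  intro a
  refine QuotientGroup.induction_on y ?_
  intro b
  have h1 : (QuotientGroup.mk a : SymRP k) * QuotientGroup.mk b
      = QuotientGroup.mk (a * b) := (QuotientGroup.mk_mul (symNull k atTop) a b).symm
  rw [h1]
  show φ (mkRP (a * b)) = φ (mkRP a) * φ (mkRP b)
  rw [hφ, hφ, hφ]
  have h2 : mkRP (pushSeq k l f S a) * mkRP (pushSeq k l f S b)
      = mkRP (pushSeq k l f S a * pushSeq k l f S b) :=
    (QuotientGroup.mk_mul (symNull l atTop) _ _).symm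
  rw [h2]
  exact (mkRP_eq_iff _ _).mpr (hG.push_mul_close a b)

lemma roundtrip_close {k l f g : ℕ → ℕ} {S T : Set ℕ}
    (hG : GoodData k l f S) (hG' : GoodData l k g T)
    (hcomp : ∀ᶠ m in atTop, g m ∈ S ∧ f (g m) = m)
    (hrt : Tendsto (fun m => (k m : ℝ) / (l (g m))) atTop (nhds 1))
    (a : ∀ n, Equiv.Perm (Fin (k n))) :
    Tendsto (fun m => hd (pushSeq l k g T (pushSeq k l f S a) m) (a m)) atTop (nhds 0) := by
  have habs : Tendsto (fun m => 2 * |(k m : ℝ) / (l (g m)) - 1|) atTop (nhds 0) := by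
    simpa using ((hrt.sub_const 1).abs.const_mul 2)
  refine squeeze_zero' (Eventually.of_forall fun m => hd_nonneg _ _) ?_ habs
  have hlg : Tendsto (fun m => l (g m)) atTop atTop := hG.hl.comp hG'.f_tendsto
  filter_upwards [hG'.eventually_mem, hcomp, hlg.eventually_ge_atTop 1] with m hmT hgm hN
  obtain ⟨hgS, hfg⟩ := hgm
  simp only [pushSeq, if_pos hmT, if_pos hgS]
  have e : updown (a (f (g m))) (l (g m)) = updown (a m) (l (g m)) :=
    congrArg (fun j => updown (a j) (l (g m))) hfg
  rw [e]
  have h1 : hd (updown (updown (a m) (l (g m))) (k m)) (a m)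
      ≤ ((2 * (k m - l (g m)) : ℕ) : ℝ) / (k m) :=
    hd_le_div _ _ (updown_roundtrip (a m))
  refine h1.trans ?_
  have h2 := natsub_div_le' (M := k m) hN
  push_cast
  rw [mul_div_assoc]
  nlinarith [h2]

lemma push_indep {k l f : ℕ → ℕ} {S S' : Set ℕ} (hS : Sᶜ.Finite) (hS' : S'ᶜ.Finite)
    (a : ∀ n, Equiv.Perm (Fin (k n))) :
    mkRP (pushSeq k l f S a) = mkRP (pushSeq k l f S' a) := by
  rw [mkRP_eq_iff]
  have hev : ∀ᶠ n in atTop, hd (pushSeq k l f S a n) (pushSeq k l f S' a n) = 0 := by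
    filter_upwards [eventually_mem_of_cofinite hS, eventually_mem_of_cofinite hS']
      with n h1 h2
    simp only [pushSeq, if_pos h1, if_pos h2, hd_self]
  refine Tendsto.congr' ?_ (tendsto_const_nhds : Tendsto (fun _ : ℕ => (0:ℝ)) atTop (nhds 0))
  exact hev.mono fun n h => h.symm
open Classical in
/-- an almost permutation `f` of `ℕ` with `lim kₙ/lₙ = 1` induces a
well-defined isomorphism `ψ_f : Sym[(kₙ)ₙ] → Sym[(lₙ)ₙ]`. -/
theorem almostPerm_induces_iso (k l : ℕ → ℕ)
    (hk : Tendsto k atTop atTop) (hl : Tendsto l atTop atTop)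
    (f : ℕ → ℕ) (hf : AlmostPerm f)
    (hratio : Tendsto (fun n => (k (f n) : ℝ) / (l n)) atTop (nhds 1)) :
    ∃ ψ : SymRP k ≃* SymRP l,
      ∀ a : ∀ n, Equiv.Perm (Fin (k n)),
        ∀ S : Set ℕ, Sᶜ.Finite → Set.InjOn f S →
          ψ (mkRP a) = mkRP (fun n => if n ∈ S then updown (a (f n)) (l n) else 1) := by
  obtain ⟨hran, S₀, hS₀c, hinj₀⟩ := hf
  set T : Set ℕ := f '' S₀ with hT
  set g : ℕ → ℕ := fun m => if h : ∃ n, n ∈ S₀ ∧ f n = m then h.choose else 0 with hg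
  have hgspec : ∀ m ∈ T, g m ∈ S₀ ∧ f (g m) = m := by
    rintro m ⟨n, hn, rfl⟩
    have hex' : ∃ n', n' ∈ S₀ ∧ f n' = f n := ⟨n, hn, rfl⟩
    rw [hg]
    simp only [dif_pos hex']
    exact hex'.choose_spec
  have hTc : Tᶜ.Finite := by
    apply Set.Finite.subset (hran.union (hS₀c.image f))
    intro m hm
    by_cases hr : m ∈ Set.range f
    · obtain ⟨n, rfl⟩ := hr
      right
      refine ⟨n, ?_, rfl⟩
      intro hn
      exact hm ⟨n, hn, rfl⟩
    · left; exact hr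
  have hginj : Set.InjOn g T := by
    intro m1 h1 m2 h2 he
    rw [← (hgspec m1 h1).2, ← (hgspec m2 h2).2, he]
  have hGf : GoodData k l f S₀ := ⟨hl, hS₀c, hinj₀, hratio⟩
  have hTev : ∀ᶠ m in atTop, m ∈ T := eventually_mem_of_cofinite hTc
  have hgcomp : ∀ᶠ m in atTop, g m ∈ S₀ ∧ f (g m) = m := hTev.mono fun m hm => hgspec m hm
  have hgt : Tendsto g atTop atTop := tendsto_atTop_of_injOn_cofinite hTc hginj
  have hinv : Tendsto (fun n => (l n : ℝ) / (k (f n))) atTop (nhds 1) := by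
    have h := hratio.inv₀ one_ne_zero
    rw [inv_one] at h
    apply h.congr
    intro n
    rw [inv_div]
  have hratio_g : Tendsto (fun m => (l (g m) : ℝ) / (k m)) atTop (nhds 1) := by
    have h1 : Tendsto (fun m => (l (g m) : ℝ) / (k (f (g m)))) atTop (nhds 1) :=
      hinv.comp hgt
    apply h1.congr'
    filter_upwards [hgcomp] with m hm
    rw [hm.2]
  have hGg : GoodData l k g T := ⟨hk, hTc, hginj, hratio_g⟩
  have hrt_fg : Tendsto (fun m => (k m : ℝ) / (l (g m))) atTop (nhds 1) := by
    have h1 : Tendsto (fun m => (k (f (g m)) : ℝ) / (l (g m))) atTop (nhds 1) :=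
      hratio.comp hgt
    apply h1.congr'
    filter_upwards [hgcomp] with m hm
    rw [hm.2]
  have hfcomp : ∀ᶠ n in atTop, f n ∈ T ∧ g (f n) = n := by
    filter_upwards [hGf.eventually_mem] with n hn
    have hfT : f n ∈ T := ⟨n, hn, rfl⟩
    exact ⟨hfT, hinj₀ (hgspec (f n) hfT).1 hn (hgspec (f n) hfT).2⟩
  obtain ⟨φ, hφ, hφm⟩ := hGf.exists_hom
  obtain ⟨χ, hχ, hχm⟩ := hGg.exists_hom
  have hleft : ∀ x : SymRP k, χ (φ x) = x := by
    intro x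
    refine QuotientGroup.induction_on x ?_
    intro a
    show χ (φ (mkRP a)) = mkRP a
    rw [hφ, hχ]
    exact (mkRP_eq_iff _ _).mpr (roundtrip_close hGf hGg hgcomp hrt_fg a)
  have hright : ∀ y : SymRP l, φ (χ y) = y := by
    intro y
    refine QuotientGroup.induction_on y ?_
    intro b
    show φ (χ (mkRP b)) = mkRP b
    rw [hχ, hφ]
    exact (mkRP_eq_iff _ _).mpr (roundtrip_close hGg hGf hfcomp hinv b)
  refine ⟨⟨⟨φ, χ, hleft, hright⟩, fun x y => hφm x y⟩, ?_⟩
  intro a S hScof hSinj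
  show φ (mkRP a) = _
  rw [hφ]
  have he : (fun n => if n ∈ S then updown (a (f n)) (l n) else 1) = pushSeq k l f S a := rfl
  rw [he]
  exact push_indep hS₀c hScof a

end SymPaper
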